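/- Let β ∈ (0,1) and define the sequence v_1 = 1/(1-β) and v_m = v_{m-1}/(1-β) + (β/(1-β)) Σ_{j=1}^{m-1} v_j v_{m-j} for m ≥ 2. Then for all m ≥ 1, v_{m+1} = N_m(β)/(1-β)^{2m+1}, where N_m(β) = Σ_{k=1}^{m} (1/m) C(m,k) C(m,k-1) β^{m-k} is the m-th Narayana polynomial. -/

import Mathlib

open Finset

/-- The `m`-th Narayana polynomial `N_m(β) = ∑_{k=1}^m (1/m) C(m,k) C(m,k-1) β^{m-k}`. -/
noncomputable def narayana (m : ℕ) (β : ℝ) : ℝ :=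
  ∑ k ∈ Finset.Icc 1 m, (1 / (m : ℝ)) * (Nat.choose m k : ℝ) * (Nat.choose m (k - 1) : ℝ) *
    β ^ (m - k)

noncomputable def nar (β : ℝ) (m : ℕ) : ℝ := if m = 0 then 1 else narayana m β

noncomputable def fc (m j : ℕ) : ℝ := (Nat.choose m j : ℝ) * (Nat.choose m (j+1) : ℝ) / (m : ℝ)

lemma fc_eq_zero {m j : ℕ} (h : m ≤ j) : fc m j = 0 := by
  simp [fc, Nat.choose_eq_zero_of_lt (by omega : m < j + 1)]


lemma choose_two (m : ℕ) : ((m.choose 2 : ℕ) : ℝ) = m*(m-1)/2 := by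
  induction m with
  | zero => norm_num
  | succ k ih =>
    have h : (k+1).choose 2 = k.choose 1 + k.choose 2 := Nat.choose_succ_succ k 1
    rw [h]
    push_cast [Nat.choose_one_right, ih]
    ring


lemma choose_mid (m : ℕ) : (((m+2).choose m : ℕ) : ℝ) = (m+2)*(m+1)/2 := by
  have h : (m+2).choose m = (m+2).choose 2 := by
    rw [← Nat.choose_symm (show 2 ≤ m+2 by omega)]
    congr 1
  rw [h, choose_two]
  push_cast
  ring

lemma key0 (n : ℕ) : (n+3 : ℝ) * fc (n+2) 0 = (2*n+3) * fc (n+1) 0 - n * fc n 0 := by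
  rcases n with _ | k
  · norm_num [fc]
  · simp only [fc, zero_add, Nat.choose_zero_right, Nat.choose_one_right]
    push_cast
    have h1 : (k:ℝ)+1 ≠ 0 := by positivity
    have h2 : (k:ℝ)+1+2 ≠ 0 := by positivity
    have h3 : (k:ℝ)+1+1 ≠ 0 := by positivity
    field_simp
    ring

lemma key1 (n : ℕ) : (n+3 : ℝ) * fc (n+2) 1 =
    (2*n+3) * (fc (n+1) 1 + fc (n+1) 0) - n * (fc n 1 - 2 * fc n 0) := by
  rcases n with _ | k
  · norm_num [fc]
  · simp only [fc, zero_add, Nat.choose_zero_right, Nat.choose_one_right, show (1:ℕ)+1 = 2 from rfl, choose_two]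
    push_cast
    have h1 : (k:ℝ)+1 ≠ 0 := by positivity
    have h2 : (k:ℝ)+1+2 ≠ 0 := by positivity
    have h3 : (k:ℝ)+1+1 ≠ 0 := by positivity
    field_simp
    ring

lemma fcA (j r : ℕ) : fc (j+3+r+2) (j+2) =
    (((j+3+r).factorial : ℝ)/((j.factorial : ℝ)*(r.factorial : ℝ)))^2 *
      (((j:ℝ)+(r:ℝ)+5)*((j:ℝ)+(r:ℝ)+4)^2) /
      (((j:ℝ)+1)^2*((j:ℝ)+2)^2*((j:ℝ)+3)*((r:ℝ)+1)^2*((r:ℝ)+2)^2*((r:ℝ)+3)) := by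
  simp only [fc]
  rw [Nat.cast_choose ℝ (show j+2 ≤ j+3+r+2 by omega),
      Nat.cast_choose ℝ (show j+2+1 ≤ j+3+r+2 by omega),
      show j+3+r+2-(j+2) = r+3 by omega, show j+3+r+2-(j+2+1) = r+2 by omega,
      show j+3+r+2 = (j+3+r)+1+1 by omega,
      show r+3 = r+2+1 by omega, show r+2 = r+1+1 by omega, show j+2 = j+1+1 by omega]
  simp only [Nat.factorial_succ]
  have h0 : ((Nat.factorial (j+3+r) : ℕ) : ℝ) ≠ 0 := by exact_mod_cast Nat.factorial_ne_zero _
  have h1 : ((Nat.factorial j : ℕ) : ℝ) ≠ 0 := by exact_mod_cast Nat.factorial_ne_zero _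
  have h2 : ((Nat.factorial r : ℕ) : ℝ) ≠ 0 := by exact_mod_cast Nat.factorial_ne_zero _
  push_cast
  have p1 : (j:ℝ)+1 ≠ 0 := by positivity
  have p2 : (r:ℝ)+1 ≠ 0 := by positivity
  have p3 : (j:ℝ)+1+1 ≠ 0 := by positivity
  have p4 : (r:ℝ)+1+1 ≠ 0 := by positivity
  have p5 : (j:ℝ)+1+1+1 ≠ 0 := by positivity
  have p6 : (r:ℝ)+1+1+1 ≠ 0 := by positivity
  have p7 : (j:ℝ)+3+r+1+1 ≠ 0 := by positivity
  have p8 : (j:ℝ)+2 ≠ 0 := by positivity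
  have p9 : (j:ℝ)+3 ≠ 0 := by positivity
  have p10 : (r:ℝ)+2 ≠ 0 := by positivity
  have p11 : (r:ℝ)+3 ≠ 0 := by positivity
  field_simp
  ring

lemma fcB (j r : ℕ) : fc (j+3+r+1) (j+2) =
    (((j+3+r).factorial : ℝ)/((j.factorial : ℝ)*(r.factorial : ℝ)))^2 *
      ((j:ℝ)+(r:ℝ)+4) /
      (((j:ℝ)+1)^2*((j:ℝ)+2)^2*((j:ℝ)+3)*((r:ℝ)+1)^2*((r:ℝ)+2)) := by
  simp only [fc]
  rw [Nat.cast_choose ℝ (show j+2 ≤ j+3+r+1 by omega),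
      Nat.cast_choose ℝ (show j+2+1 ≤ j+3+r+1 by omega),
      show j+3+r+1-(j+2) = r+2 by omega, show j+3+r+1-(j+2+1) = r+1 by omega,
      show j+3+r+1 = (j+3+r)+1 from rfl, show r+2 = r+1+1 by omega, show j+2 = j+1+1 by omega]
  simp only [Nat.factorial_succ]
  have h0 : ((Nat.factorial (j+3+r) : ℕ) : ℝ) ≠ 0 := by exact_mod_cast Nat.factorial_ne_zero _
  have h1 : ((Nat.factorial j : ℕ) : ℝ) ≠ 0 := by exact_mod_cast Nat.factorial_ne_zero _
  have h2 : ((Nat.factorial r : ℕ) : ℝ) ≠ 0 := by exact_mod_cast Nat.factorial_ne_zero _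
  push_cast
  have p1 : (j:ℝ)+1 ≠ 0 := by positivity
  have p2 : (r:ℝ)+1 ≠ 0 := by positivity
  have p3 : (j:ℝ)+1+1 ≠ 0 := by positivity
  have p4 : (r:ℝ)+1+1 ≠ 0 := by positivity
  have p5 : (j:ℝ)+1+1+1 ≠ 0 := by positivity
  have p6 : (r:ℝ)+1+1+1 ≠ 0 := by positivity
  have p7 : (j:ℝ)+3+r+1 ≠ 0 := by positivity
  have p8 : (j:ℝ)+2 ≠ 0 := by positivity
  have p9 : (j:ℝ)+3 ≠ 0 := by positivity
  have p10 : (r:ℝ)+2 ≠ 0 := by positivity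
  have p11 : (r:ℝ)+3 ≠ 0 := by positivity
  have p12 : (j:ℝ)+3+r ≠ 0 := by positivity
  field_simp
  ring

lemma fcC (j r : ℕ) : fc (j+3+r+1) (j+1) =
    (((j+3+r).factorial : ℝ)/((j.factorial : ℝ)*(r.factorial : ℝ)))^2 *
      ((j:ℝ)+(r:ℝ)+4) /
      (((j:ℝ)+1)^2*((j:ℝ)+2)*((r:ℝ)+1)^2*((r:ℝ)+2)^2*((r:ℝ)+3)) := by
  simp only [fc]
  rw [Nat.cast_choose ℝ (show j+1 ≤ j+3+r+1 by omega),
      Nat.cast_choose ℝ (show j+1+1 ≤ j+3+r+1 by omega),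
      show j+3+r+1-(j+1) = r+3 by omega, show j+3+r+1-(j+1+1) = r+2 by omega,
      show j+3+r+1 = (j+3+r)+1 from rfl, show r+3 = r+2+1 by omega, show r+2 = r+1+1 by omega]
  simp only [Nat.factorial_succ]
  have h0 : ((Nat.factorial (j+3+r) : ℕ) : ℝ) ≠ 0 := by exact_mod_cast Nat.factorial_ne_zero _
  have h1 : ((Nat.factorial j : ℕ) : ℝ) ≠ 0 := by exact_mod_cast Nat.factorial_ne_zero _
  have h2 : ((Nat.factorial r : ℕ) : ℝ) ≠ 0 := by exact_mod_cast Nat.factorial_ne_zero _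
  push_cast
  have p1 : (j:ℝ)+1 ≠ 0 := by positivity
  have p2 : (r:ℝ)+1 ≠ 0 := by positivity
  have p3 : (j:ℝ)+1+1 ≠ 0 := by positivity
  have p4 : (r:ℝ)+1+1 ≠ 0 := by positivity
  have p5 : (j:ℝ)+1+1+1 ≠ 0 := by positivity
  have p6 : (r:ℝ)+1+1+1 ≠ 0 := by positivity
  have p7 : (j:ℝ)+3+r+1 ≠ 0 := by positivity
  have p8 : (j:ℝ)+2 ≠ 0 := by positivity
  have p9 : (j:ℝ)+3 ≠ 0 := by positivity
  have p10 : (r:ℝ)+2 ≠ 0 := by positivity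
  have p11 : (r:ℝ)+3 ≠ 0 := by positivity
  have p12 : (j:ℝ)+3+r ≠ 0 := by positivity
  field_simp
  ring

lemma fcD (j r : ℕ) : fc (j+3+r) (j+2) =
    (((j+3+r).factorial : ℝ)/((j.factorial : ℝ)*(r.factorial : ℝ)))^2 *
      (1) /
      (((j:ℝ)+1)^2*((j:ℝ)+2)^2*((j:ℝ)+3)*((r:ℝ)+1)*((j:ℝ)+(r:ℝ)+3)) := by
  simp only [fc]
  rw [Nat.cast_choose ℝ (show j+2 ≤ j+3+r by omega),
      Nat.cast_choose ℝ (show j+2+1 ≤ j+3+r by omega),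
      show j+3+r-(j+2) = r+1 by omega, show j+3+r-(j+2+1) = r by omega,
      show j+2 = j+1+1 by omega]
  simp only [Nat.factorial_succ]
  have h0 : ((Nat.factorial (j+3+r) : ℕ) : ℝ) ≠ 0 := by exact_mod_cast Nat.factorial_ne_zero _
  have h1 : ((Nat.factorial j : ℕ) : ℝ) ≠ 0 := by exact_mod_cast Nat.factorial_ne_zero _
  have h2 : ((Nat.factorial r : ℕ) : ℝ) ≠ 0 := by exact_mod_cast Nat.factorial_ne_zero _
  push_cast
  have p1 : (j:ℝ)+1 ≠ 0 := by positivity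
  have p2 : (r:ℝ)+1 ≠ 0 := by positivity
  have p3 : (j:ℝ)+1+1 ≠ 0 := by positivity
  have p4 : (r:ℝ)+1+1 ≠ 0 := by positivity
  have p5 : (j:ℝ)+1+1+1 ≠ 0 := by positivity
  have p6 : (r:ℝ)+1+1+1 ≠ 0 := by positivity
  have p7 : (j:ℝ)+3+r+1 ≠ 0 := by positivity
  have p8 : (j:ℝ)+2 ≠ 0 := by positivity
  have p9 : (j:ℝ)+3 ≠ 0 := by positivity
  have p10 : (r:ℝ)+2 ≠ 0 := by positivity
  have p11 : (r:ℝ)+3 ≠ 0 := by positivity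
  have p12 : (j:ℝ)+3+r ≠ 0 := by positivity
  field_simp
  ring

lemma fcE (j r : ℕ) : fc (j+3+r) (j+1) =
    (((j+3+r).factorial : ℝ)/((j.factorial : ℝ)*(r.factorial : ℝ)))^2 *
      (1) /
      (((j:ℝ)+1)^2*((j:ℝ)+2)*((r:ℝ)+1)^2*((r:ℝ)+2)*((j:ℝ)+(r:ℝ)+3)) := by
  simp only [fc]
  rw [Nat.cast_choose ℝ (show j+1 ≤ j+3+r by omega),
      Nat.cast_choose ℝ (show j+1+1 ≤ j+3+r by omega),
      show j+3+r-(j+1) = r+2 by omega, show j+3+r-(j+1+1) = r+1 by omega,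
      show r+2 = r+1+1 by omega]
  simp only [Nat.factorial_succ]
  have h0 : ((Nat.factorial (j+3+r) : ℕ) : ℝ) ≠ 0 := by exact_mod_cast Nat.factorial_ne_zero _
  have h1 : ((Nat.factorial j : ℕ) : ℝ) ≠ 0 := by exact_mod_cast Nat.factorial_ne_zero _
  have h2 : ((Nat.factorial r : ℕ) : ℝ) ≠ 0 := by exact_mod_cast Nat.factorial_ne_zero _
  push_cast
  have p1 : (j:ℝ)+1 ≠ 0 := by positivity
  have p2 : (r:ℝ)+1 ≠ 0 := by positivity
  have p3 : (j:ℝ)+1+1 ≠ 0 := by positivity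
  have p4 : (r:ℝ)+1+1 ≠ 0 := by positivity
  have p5 : (j:ℝ)+1+1+1 ≠ 0 := by positivity
  have p6 : (r:ℝ)+1+1+1 ≠ 0 := by positivity
  have p7 : (j:ℝ)+3+r+1 ≠ 0 := by positivity
  have p8 : (j:ℝ)+2 ≠ 0 := by positivity
  have p9 : (j:ℝ)+3 ≠ 0 := by positivity
  have p10 : (r:ℝ)+2 ≠ 0 := by positivity
  have p11 : (r:ℝ)+3 ≠ 0 := by positivity
  have p12 : (j:ℝ)+3+r ≠ 0 := by positivity
  field_simp
  ring

lemma fcG (j r : ℕ) : fc (j+3+r) (j) =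
    (((j+3+r).factorial : ℝ)/((j.factorial : ℝ)*(r.factorial : ℝ)))^2 *
      (1) /
      (((j:ℝ)+1)*((r:ℝ)+1)^2*((r:ℝ)+2)^2*((r:ℝ)+3)*((j:ℝ)+(r:ℝ)+3)) := by
  simp only [fc]
  rw [Nat.cast_choose ℝ (show j ≤ j+3+r by omega),
      Nat.cast_choose ℝ (show j+1 ≤ j+3+r by omega),
      show j+3+r-(j) = r+3 by omega, show j+3+r-(j+1) = r+2 by omega,
      show r+3 = r+2+1 by omega, show r+2 = r+1+1 by omega]
  simp only [Nat.factorial_succ]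
  have h0 : ((Nat.factorial (j+3+r) : ℕ) : ℝ) ≠ 0 := by exact_mod_cast Nat.factorial_ne_zero _
  have h1 : ((Nat.factorial j : ℕ) : ℝ) ≠ 0 := by exact_mod_cast Nat.factorial_ne_zero _
  have h2 : ((Nat.factorial r : ℕ) : ℝ) ≠ 0 := by exact_mod_cast Nat.factorial_ne_zero _
  push_cast
  have p1 : (j:ℝ)+1 ≠ 0 := by positivity
  have p2 : (r:ℝ)+1 ≠ 0 := by positivity
  have p3 : (j:ℝ)+1+1 ≠ 0 := by positivity
  have p4 : (r:ℝ)+1+1 ≠ 0 := by positivity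
  have p5 : (j:ℝ)+1+1+1 ≠ 0 := by positivity
  have p6 : (r:ℝ)+1+1+1 ≠ 0 := by positivity
  have p7 : (j:ℝ)+3+r+1 ≠ 0 := by positivity
  have p8 : (j:ℝ)+2 ≠ 0 := by positivity
  have p9 : (j:ℝ)+3 ≠ 0 := by positivity
  have p10 : (r:ℝ)+2 ≠ 0 := by positivity
  have p11 : (r:ℝ)+3 ≠ 0 := by positivity
  have p12 : (j:ℝ)+3+r ≠ 0 := by positivity
  field_simp
  ring

lemma key2_main (j r : ℕ) : (((j+3+r : ℕ) : ℝ)+3) * fc (j+3+r+2) (j+2) =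
    (2*((j+3+r : ℕ) : ℝ)+3) * (fc (j+3+r+1) (j+2) + fc (j+3+r+1) (j+1)) -
      ((j+3+r : ℕ) : ℝ) * (fc (j+3+r) (j+2) - 2 * fc (j+3+r) (j+1) + fc (j+3+r) j) := by
  rw [fcA, fcB, fcC, fcD, fcE, fcG]
  generalize (((j+3+r).factorial : ℝ)/((j.factorial : ℝ)*(r.factorial : ℝ))) = t
  push_cast
  have p1 : (j:ℝ)+1 ≠ 0 := by positivity
  have p2 : (r:ℝ)+1 ≠ 0 := by positivity
  have p3 : (j:ℝ)+2 ≠ 0 := by positivity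
  have p4 : (r:ℝ)+2 ≠ 0 := by positivity
  have p5 : (j:ℝ)+3 ≠ 0 := by positivity
  have p6 : (r:ℝ)+3 ≠ 0 := by positivity
  have p7 : (j:ℝ)+(r:ℝ)+3 ≠ 0 := by positivity
  field_simp
  ring

lemma key2 (n j : ℕ) : ((n:ℝ)+3) * fc (n+2) (j+2) =
    (2*(n:ℝ)+3) * (fc (n+1) (j+2) + fc (n+1) (j+1)) -
      (n:ℝ) * (fc n (j+2) - 2 * fc n (j+1) + fc n j) := by
  rcases lt_or_ge n (j+1) with h | h
  · rw [fc_eq_zero (show n+2 ≤ j+2 by omega), fc_eq_zero (show n+1 ≤ j+2 by omega),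
      fc_eq_zero (show n+1 ≤ j+1 by omega), fc_eq_zero (show n ≤ j+2 by omega),
      fc_eq_zero (show n ≤ j+1 by omega), fc_eq_zero (show n ≤ j by omega)]
    ring
  · rcases eq_or_lt_of_le h with h1 | h1
    · -- n = j+1
      obtain rfl : n = j+1 := h1.symm
      have e1 : (j+1+2).choose (j+2) = j+3 := by
        rw [show j+1+2 = j+2+1 by omega, Nat.choose_succ_self_right]
      have e2 : (j+1+2).choose (j+2+1) = 1 := by
        rw [show j+2+1 = j+1+2 by omega, Nat.choose_self]
      rw [fc_eq_zero (show j+1+1 ≤ j+2 by omega), fc_eq_zero (show j+1 ≤ j+2 by omega),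
        fc_eq_zero (show j+1 ≤ j+1 by omega)]
      simp only [fc, e1, e2, Nat.choose_succ_self_right, Nat.choose_self]
      push_cast
      have p1 : (j:ℝ)+1 ≠ 0 := by positivity
      have p2 : (j:ℝ)+1+1 ≠ 0 := by positivity
      have p3 : (j:ℝ)+1+2 ≠ 0 := by positivity
      field_simp
      ring
    · rcases eq_or_lt_of_le (show j+2 ≤ n by omega) with h2 | h2
      · -- n = j+2
        obtain rfl : n = j+2 := h2.symm
        have e1 := choose_mid (j+2)
        have e2 : (j+2+2).choose (j+2+1) = j+4 := by
          rw [show j+2+2 = j+2+1+1 by omega, Nat.choose_succ_self_right]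
        have e3 := choose_mid (j+1)
        rw [show j+1+2 = j+2+1 by omega] at e3
        have e4 : (j+2+1).choose (j+1+1) = j+3 := by
          rw [show j+1+1 = j+2 by omega, Nat.choose_succ_self_right]
        have e5 : (j+2).choose (j+1+1) = 1 := by
          rw [show j+1+1 = j+2 by omega, Nat.choose_self]
        have e0 := choose_mid j
        rw [fc_eq_zero (show j+2 ≤ j+2 by omega)]
        simp only [fc, e1, e2, e3, e4, e5, e0, Nat.choose_succ_self_right, Nat.choose_self]
        push_cast
        have p1 : (j:ℝ)+2 ≠ 0 := by positivity
        have p2 : (j:ℝ)+2+1 ≠ 0 := by positivity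
        have p3 : (j:ℝ)+2+2 ≠ 0 := by positivity
        field_simp
        ring
      · -- n ≥ j+3
        obtain ⟨r, rfl⟩ : ∃ r, n = j+3+r := ⟨n-(j+3), by omega⟩
        exact key2_main j r

lemma narayana_eq_sum (m M : ℕ) (hM : m ≤ M) (β : ℝ) :
    narayana m β = ∑ j ∈ range M, fc m j * β ^ j := by
  rw [← Finset.sum_subset (Finset.range_subset_range.2 hM)
    (fun j _ hj => by rw [fc_eq_zero (by simpa using hj), zero_mul])]
  rw [narayana]
  refine Finset.sum_nbij' (fun k => m - k) (fun j => m + 1 - (j+1)) ?_ ?_ ?_ ?_ ?_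
  · intro k hk; simp only [Finset.mem_Icc] at hk; simp only [Finset.mem_range]; omega
  · intro j hj; simp only [Finset.mem_range] at hj; simp only [Finset.mem_Icc]; omega
  · intro k hk; simp only [Finset.mem_Icc] at hk; omega
  · intro j hj; simp only [Finset.mem_range] at hj; omega
  · intro k hk
    simp only [Finset.mem_Icc] at hk
    rw [fc, Nat.choose_symm (by omega), show m - k + 1 = m - (k-1) by omega,
      Nat.choose_symm (by omega)]
    ring

lemma nar_eq_sum {m M : ℕ} (hm : 1 ≤ m) (hM : m ≤ M) (β : ℝ) :
    nar β m = ∑ j ∈ range M, fc m j * β ^ j := by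
  rw [nar, if_neg (by omega), narayana_eq_sum m M hM]

lemma nar_zero (β : ℝ) : nar β 0 = 1 := rfl

lemma nar_one (β : ℝ) : nar β 1 = 1 := by
  rw [nar_eq_sum le_rfl le_rfl]
  simp [fc]

lemma nar_two (β : ℝ) : nar β 2 = 1 + β := by
  rw [nar_eq_sum one_le_two le_rfl, show (2:ℕ) = 1+1 from rfl,
    Finset.sum_range_succ, Finset.sum_range_one]
  norm_num [fc]

def S1 (g : ℕ → ℝ) : ℕ → ℝ
  | 0 => 0
  | (j+1) => g j

lemma shift_sum (g : ℕ → ℝ) (β : ℝ) (M : ℕ) :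
    ∑ j ∈ Finset.range (M+1), S1 g j * β ^ j = β * ∑ j ∈ Finset.range M, g j * β ^ j := by
  rw [Finset.sum_range_succ' (fun j => S1 g j * β ^ j) M, Finset.mul_sum]
  simp only [S1, pow_zero, mul_one, add_zero]
  exact Finset.sum_congr rfl fun j _ => by ring

lemma recL (β : ℝ) (n : ℕ) : ((n:ℝ)+3) * nar β (n+2) =
    (2*(n:ℝ)+3) * ((1+β) * nar β (n+1)) - (n:ℝ) * ((1-β)^2 * nar β n) := by
  rcases Nat.eq_zero_or_pos n with rfl | hn
  · rw [nar_one, nar_two]; push_cast; ring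
  · have hβ1 : β * nar β (n+1) = ∑ j ∈ range (n+4), S1 (fc (n+1)) j * β ^ j := by
      rw [show n+4 = (n+3)+1 from rfl, shift_sum, ← nar_eq_sum (by omega) (by omega)]
    have hMid : (1+β) * nar β (n+1)
        = ∑ j ∈ range (n+4), (fc (n+1) j + S1 (fc (n+1)) j) * β ^ j := by
      simp only [add_mul, Finset.sum_add_distrib]
      rw [← nar_eq_sum (by omega) (by omega) β, ← hβ1]
      ring
    have hb1 : ∑ j ∈ range (n+4), S1 (fc n) j * β ^ j = β * nar β n := by
      rw [show n+4 = (n+3)+1 from rfl, shift_sum, ← nar_eq_sum (by omega) (by omega)]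
    have hb2 : ∑ j ∈ range (n+4), S1 (S1 (fc n)) j * β ^ j = β * (β * nar β n) := by
      rw [show n+4 = (n+3)+1 from rfl, shift_sum, show n+3 = (n+2)+1 from rfl, shift_sum,
        ← nar_eq_sum (by omega) (by omega)]
    have hLow : (1-β)^2 * nar β n
        = ∑ j ∈ range (n+4), (fc n j - 2 * S1 (fc n) j + S1 (S1 (fc n)) j) * β ^ j := by
      simp only [sub_mul, add_mul, Finset.sum_add_distrib, Finset.sum_sub_distrib]
      rw [← nar_eq_sum (by omega) (by omega) β, hb2]
      have hb1' : ∑ x ∈ range (n+4), 2 * S1 (fc n) x * β ^ x = 2*(β * nar β n) := by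
        rw [← hb1, Finset.mul_sum]
        exact Finset.sum_congr rfl fun j _ => by ring
      rw [hb1']
      ring
    rw [hMid, hLow, nar_eq_sum (show 1 ≤ n+2 by omega) (show n+2 ≤ n+4 by omega) β,
      Finset.mul_sum, Finset.mul_sum, Finset.mul_sum, ← Finset.sum_sub_distrib]
    refine Finset.sum_congr rfl fun j _ => ?_
    rcases j with _ | _ | k
    · have h := key0 n
      simp only [S1, pow_zero]
      push_cast at h ⊢
      linear_combination h
    · have h := key1 n
      simp only [S1, pow_one]
      push_cast at h ⊢
      linear_combination β * h
    · have h := key2 n k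
      simp only [S1]
      push_cast at h ⊢
      linear_combination β^(k+2) * h

noncomputable def Tn (β : ℝ) (n : ℕ) : ℝ := ∑ a ∈ range (n+1), nar β a * nar β (n-a)
noncomputable def Wn (β : ℝ) (n : ℕ) : ℝ := ∑ a ∈ range (n+1), (a:ℝ) * (nar β a * nar β (n-a))

lemma Tn_def (β : ℝ) (n : ℕ) : Tn β n = ∑ a ∈ range (n+1), nar β a * nar β (n-a) := rfl
lemma Wn_def (β : ℝ) (n : ℕ) :
    Wn β n = ∑ a ∈ range (n+1), (a:ℝ) * (nar β a * nar β (n-a)) := rfl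

lemma peel3 (g : ℕ → ℝ) (n : ℕ) :
    ∑ b ∈ range (n+3), g b = (∑ a ∈ range n, g (a+1+1)) + (g 0 + g (0+1) + g (n+1+1)) := by
  rw [show n+3 = (n+2)+1 from rfl, Finset.sum_range_succ, show n+2 = (n+1)+1 from rfl,
    Finset.sum_range_succ', Finset.sum_range_succ']
  ring

lemma peelC (g : ℕ → ℝ) (n : ℕ) :
    ∑ b ∈ range (n+2), g b = (∑ a ∈ range n, g (a+1)) + (g 0 + g (n+1)) := by
  rw [show n+2 = (n+1)+1 from rfl, Finset.sum_range_succ, Finset.sum_range_succ']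
  ring

lemma twoW (β : ℝ) (n : ℕ) : 2 * Wn β n = (n:ℝ) * Tn β n := by
  have h := Finset.sum_range_reflect (fun a => (a:ℝ) * (nar β a * nar β (n-a))) (n+1)
  have h2 : Wn β n = ∑ a ∈ range (n+1), ((n:ℝ) - a) * (nar β (n-a) * nar β a) := by
    rw [Wn_def, ← h]
    refine Finset.sum_congr rfl fun a ha => ?_
    simp only [Finset.mem_range] at ha
    rw [show n+1-1-a = n-a by omega, show n - (n-a) = a by omega,
      Nat.cast_sub (by omega : a ≤ n)]
  rw [two_mul]
  nth_rewrite 2 [h2]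
  rw [Wn_def, ← Finset.sum_add_distrib, Tn_def, Finset.mul_sum]
  exact Finset.sum_congr rfl fun a ha => by ring

lemma Erel (β : ℝ) (n : ℕ) :
    ((n:ℝ)+4) * Tn β (n+2) - 2*((n:ℝ)+4) * nar β (n+2) - 4 * nar β (n+1)
      = 2*(1+β)*((n:ℝ)+2) * (Tn β (n+1) - 2*nar β (n+1))
        - (1-β)^2 * (n:ℝ) * (Tn β n - 2*nar β n) := by
  have hsum : ∑ a ∈ range n, ((a:ℝ)+3) * nar β (a+2) * nar β (n-a)
      = ∑ a ∈ range n,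
          ((2*(a:ℝ)+3) * ((1+β) * nar β (a+1)) - (a:ℝ) * ((1-β)^2 * nar β a)) * nar β (n-a) := by
    refine Finset.sum_congr rfl fun a _ => ?_
    have h := recL β a
    linear_combination (nar β (n-a)) * h
  have hB : ∑ a ∈ range n,
        ((2*(a:ℝ)+3) * ((1+β) * nar β (a+1)) - (a:ℝ) * ((1-β)^2 * nar β a)) * nar β (n-a)
      = (1+β) * ∑ a ∈ range n, (2*(a:ℝ)+3) * (nar β (a+1) * nar β (n-a))
        - (1-β)^2 * ∑ a ∈ range n, (a:ℝ) * (nar β a * nar β (n-a)) := by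
    rw [Finset.mul_sum, Finset.mul_sum, ← Finset.sum_sub_distrib]
    exact Finset.sum_congr rfl fun a _ => by ring
  have hA : ∑ a ∈ range n, ((a:ℝ)+3) * nar β (a+2) * nar β (n-a)
      = Wn β (n+2) + Tn β (n+2) - nar β (n+2) - 2*nar β (n+1) - ((n:ℝ)+3)*nar β (n+2) := by
    have e2 := peel3 (fun b => ((b:ℝ)+1) * (nar β b * nar β (n+2-b))) n
    have e1 : Wn β (n+2) + Tn β (n+2)
        = ∑ b ∈ range (n+3), ((b:ℝ)+1) * (nar β b * nar β (n+2-b)) := by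
      rw [Wn_def, Tn_def, ← Finset.sum_add_distrib, show n+2+1 = n+3 from rfl]
      exact Finset.sum_congr rfl fun b _ => by ring
    have e3 : ∑ a ∈ range n, (((a+1+1:ℕ):ℝ)+1) * (nar β (a+1+1) * nar β (n+2-(a+1+1)))
        = ∑ a ∈ range n, ((a:ℝ)+3) * nar β (a+2) * nar β (n-a) := by
      refine Finset.sum_congr rfl fun a ha => ?_
      simp only [Finset.mem_range] at ha
      rw [show a+1+1 = a+2 from rfl, show n+2-(a+2) = n-a by omega]
      push_cast
      ring
    have v0 : (((0:ℕ):ℝ)+1) * (nar β 0 * nar β (n+2-0)) = nar β (n+2) := by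
      rw [nar_zero, show n+2-0 = n+2 from rfl]
      norm_num
    have v1 : (((0+1:ℕ):ℝ)+1) * (nar β (0+1) * nar β (n+2-(0+1))) = 2*nar β (n+1) := by
      rw [show (0+1:ℕ) = 1 from rfl, nar_one, show n+2-1 = n+1 from rfl]
      norm_num
    have v2 : (((n+1+1:ℕ):ℝ)+1) * (nar β (n+1+1) * nar β (n+2-(n+1+1)))
        = ((n:ℝ)+3) * nar β (n+2) := by
      rw [show n+1+1 = n+2 from rfl, show n+2-(n+2) = 0 by omega, nar_zero]
      push_cast
      ring
    linear_combination -e1 - e2 - e3 - v0 - v1 - v2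
  have hC : ∑ a ∈ range n, (2*(a:ℝ)+3) * (nar β (a+1) * nar β (n-a))
      = 2*Wn β (n+1) + Tn β (n+1) - nar β (n+1) - (2*(n:ℝ)+3)*nar β (n+1) := by
    have e2 := peelC (fun b => (2*(b:ℝ)+1) * (nar β b * nar β (n+1-b))) n
    have e1 : 2*Wn β (n+1) + Tn β (n+1)
        = ∑ b ∈ range (n+2), (2*(b:ℝ)+1) * (nar β b * nar β (n+1-b)) := by
      rw [Wn_def, Tn_def, Finset.mul_sum, ← Finset.sum_add_distrib, show n+1+1 = n+2 from rfl]
      exact Finset.sum_congr rfl fun b _ => by ring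
    have e3 : ∑ a ∈ range n, (2*((a+1:ℕ):ℝ)+1) * (nar β (a+1) * nar β (n+1-(a+1)))
        = ∑ a ∈ range n, (2*(a:ℝ)+3) * (nar β (a+1) * nar β (n-a)) := by
      refine Finset.sum_congr rfl fun a ha => ?_
      simp only [Finset.mem_range] at ha
      rw [show n+1-(a+1) = n-a by omega]
      push_cast
      ring
    have v0 : (2*((0:ℕ):ℝ)+1) * (nar β 0 * nar β (n+1-0)) = nar β (n+1) := by
      rw [nar_zero, show n+1-0 = n+1 from rfl]
      norm_num
    have v2 : (2*((n+1:ℕ):ℝ)+1) * (nar β (n+1) * nar β (n+1-(n+1)))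
        = (2*(n:ℝ)+3)*nar β (n+1) := by
      rw [show n+1-(n+1) = 0 by omega, nar_zero]
      push_cast
      ring
    linear_combination -e1 - e2 - e3 - v0 - v2
  have hD : ∑ a ∈ range n, (a:ℝ) * (nar β a * nar β (n-a)) = Wn β n - (n:ℝ)*nar β n := by
    have e := Finset.sum_range_succ (fun a => (a:ℝ) * (nar β a * nar β (n-a))) n

    rw [Wn_def, e, Nat.sub_self, nar_zero]
    ring
  have tw2 := twoW β (n+2)
  have tw1 := twoW β (n+1)
  have tw0 := twoW β n
  push_cast at tw2 tw1
  linear_combination 2*hsum - 2*hA + 2*hB + 2*(1+β)*hC - 2*(1-β)^2*hD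
    - tw2 + 2*(1+β)*tw1 - (1-β)^2*tw0

lemma conv (β : ℝ) : ∀ n : ℕ, β * Tn β n = nar β (n+1) - (1-β) * nar β n := by
  intro n
  induction n using Nat.strong_induction_on with
  | _ n ih =>
    match n, ih with
    | 0, _ => 
      rw [Tn_def]
      simp [nar_zero, nar_one, nar_two]
    | 1, _ =>
      rw [Tn_def, Finset.sum_range_succ, Finset.sum_range_one]
      simp only [Nat.sub_self, Nat.sub_zero, nar_zero, nar_one]
      rw [show (1:ℕ)+1 = 2 from rfl, nar_two]
      ring
    | (m+2), ih =>
      have hE := Erel β m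
      have hL0 := recL β m
      have hL1 := recL β (m+1)
      have hI0 := ih m (by omega)
      have hI1 := ih (m+1) (by omega)
      simp only [show m+1+2 = m+3 from rfl, show m+1+1 = m+2 from rfl,
        show m+2+1 = m+3 from rfl] at hL1 hI1 ⊢
      push_cast at hL1
      have h4 : ((m:ℝ)+4) ≠ 0 := by positivity
      apply mul_left_cancel₀ h4
      linear_combination β*hE + 2*(1+β)*((m:ℝ)+2)*hI1 - (1-β)^2*(m:ℝ)*hI0 - hL1 + (1+β)*hL0

/-- With `v₁ = 1/(1-β)` and `v_m = v_{m-1}/(1-β) + (β/(1-β)) ∑_{j=1}^{m-1} v_j v_{m-j}`,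
we have `v_{m+1} = N_m(β)/(1-β)^{2m+1}` for all `m ≥ 1`. -/

theorem stmt2 (β : ℝ) (hβ : β ∈ Set.Ioo (0 : ℝ) 1) (v : ℕ → ℝ)
    (hv1 : v 1 = 1 / (1 - β))
    (hvrec : ∀ m, 2 ≤ m →
      v m = v (m - 1) / (1 - β) + β / (1 - β) * ∑ j ∈ Finset.Ico 1 m, v j * v (m - j)) :
    ∀ m, 1 ≤ m → v (m + 1) = narayana m β / (1 - β) ^ (2 * m + 1) := by
  have hb : (1:ℝ) - β ≠ 0 := by
    have h1 := hβ.2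
    intro h
    simp only [Set.mem_Ioo] at hβ
    nlinarith [hβ.2]
  have main : ∀ m, 1 ≤ m → v m = nar β (m-1) / (1-β)^(2*m-1) := by
    intro m
    induction m using Nat.strong_induction_on with
    | _ m ih =>
      match m, ih with
      | 0, _ => omega
      | 1, _ =>
        intro _
        rw [hv1, show (1:ℕ)-1 = 0 from rfl, nar_zero, show 2*1-1 = 1 by omega, pow_one]
      | (k+2), ih =>
        intro _
        have hrec := hvrec (k+2) (by omega)
        have hsum : ∑ j ∈ Finset.Ico 1 (k+2), v j * v (k+2-j)
            = Tn β k / (1-β)^(2*k+2) := by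
          have hper : ∀ j ∈ Finset.Ico 1 (k+2), v j * v (k+2-j)
              = nar β (j-1) * nar β (k+1-j) / (1-β)^(2*k+2) := by
            intro j hj
            simp only [Finset.mem_Ico] at hj
            rw [ih j (by omega) (by omega), ih (k+2-j) (by omega) (by omega)]
            rw [div_mul_div_comm, ← pow_add]
            rw [show k+2-j-1 = k+1-j by omega, show 2*j-1 + (2*(k+2-j)-1) = 2*k+2 by omega]
          rw [Finset.sum_congr rfl hper, ← Finset.sum_div]
          congr 1
          rw [Finset.sum_Ico_eq_sum_range, Tn_def, show k+2-1 = k+1 from rfl]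
          refine Finset.sum_congr rfl fun i hi => ?_
          simp only [Finset.mem_range] at hi
          rw [show 1+i-1 = i by omega, show k+1-(1+i) = k-i by omega]
        rw [hrec, hsum, show k+2-1 = k+1 from rfl, ih (k+1) (by omega) (by omega),
          show k+1-1 = k from rfl, show 2*(k+1)-1 = 2*k+1 by omega,
          show 2*(k+2)-1 = 2*k+3 by omega]
        have hc := conv β k
        rw [div_div, ← pow_succ, show 2*k+1+1 = 2*k+2 from rfl, div_mul_div_comm, hc]
        have hp2 : (1-β)^(2*k+2) ≠ 0 := pow_ne_zero _ hb
        have hp3 : (1-β)^(2*k+3) ≠ 0 := pow_ne_zero _ hb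
        rw [show (2:ℕ)*k+3 = (2*k+2)+1 from rfl, pow_succ]
        field_simp
        ring
  intro m hm
  rw [main (m+1) (by omega), show m+1-1 = m from rfl, show 2*(m+1)-1 = 2*m+1 by omega,
    nar, if_neg (by omega)]
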